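/- Let P be a finite poset and v ∈ P. Let η_v = T_{x₁} ∘ ⋯ ∘ T_{x_k} where (x₁, …, x_k) is a linear extension of the subposet {x ∈ P : x < v}, and define τ_v* = η_v ∘ T_v ∘ η_v⁻¹ and ε_v* = η_v ∘ E_v ∘ η_v⁻¹. Then Θ ∘ Δ⁻¹ ∘ τ_v = τ_v* ∘ Θ ∘ Δ⁻¹ and Θ ∘ Δ⁻¹ ∘ ε_v = ε_v* ∘ Θ ∘ Δ⁻¹, on all S-labelings for which both sides are defined (i.e., every element inverted in the computation is nonzero). -/

import Mathlib

/-!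
Noncommutative (skew field) antichain/order toggling and rowmotion on a finite poset `P`,
with labels in a division ring `S` and a fixed central element `C`, following
Joseph–Roby, "Birational and noncommutative lifts of antichain toggling and rowmotion".
All maps are partial; definedness ("every element inverted in the computation is
nonzero") is recorded by explicit predicates.
-/

open Finset

attribute [local instance] Classical.propDecidable

variable {P : Type*} [Fintype P] [PartialOrder P] {S : Type*} [DivisionRing S]

/-- `c` is a saturated chain in `P`: consecutive entries are covers. -/
def SatChain {P : Type*} [PartialOrder P] {k : ℕ} (c : Fin (k + 1) → P) : Prop :=
  ∀ i : Fin k, c i.castSucc ⋖ c i.succ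

/-- `c` is a maximal chain of `P`: a saturated chain from a minimal element to a maximal
element of `P` (equivalently, the restriction to `P` of a maximal chain
`0̂ ⋖ y₁ ⋖ ⋯ ⋖ y_k ⋖ 1̂` of `P̂`). -/
def MaxChain {P : Type*} [PartialOrder P] {k : ℕ} (c : Fin (k + 1) → P) : Prop :=
  SatChain c ∧ IsMin (c 0) ∧ IsMax (c (Fin.last k))

/-- `∑_{u ∈ P̂, u ⋖ v} f(u)`, with the convention `f(0̂) = 1`. -/
noncomputable def lSum (f : P → S) (v : P) : S :=
  (if IsMin v then 1 else 0) + ∑ u ∈ univ.filter (fun u => u ⋖ v), f u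

/-- `∑_{u ∈ P̂, u ⋗ v} f(u)⁻¹`, with the convention `f(1̂) = C`; its inverse is the
parallel sum `⫲_{u ∈ P̂, u ⋗ v} f(u)` (where `x ⫲ y = (x⁻¹ + y⁻¹)⁻¹`). -/
noncomputable def uInvSum (C : S) (f : P → S) (v : P) : S :=
  (if IsMax v then C⁻¹ else 0) + ∑ u ∈ univ.filter (fun u => v ⋖ u), (f u)⁻¹

/-- The noncommutative order toggle `T_v`: it replaces the label at `v` by
`(∑_{u ∈ P̂, u ⋖ v} f(u)) · f(v)⁻¹ · (⫲_{u ∈ P̂, u ⋗ v} f(u))` and fixes all other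
labels. -/
noncomputable def ncT (C : S) (v : P) (f : P → S) : P → S :=
  fun x => if x = v then lSum f v * (f v)⁻¹ * (uInvSum C f v)⁻¹ else f x

/-- The noncommutative order elggot `E_v`: it replaces the label at `v` by
`(⫲_{u ∈ P̂, u ⋗ v} f(u)) · f(v)⁻¹ · (∑_{u ∈ P̂, u ⋖ v} f(u))` and fixes all other
labels. -/
noncomputable def ncE (C : S) (v : P) (f : P → S) : P → S :=
  fun x => if x = v then (uInvSum C f v)⁻¹ * (f v)⁻¹ * lSum f v else f x

/-- Definedness of one application of `T_v` or `E_v` to `f`: every element inverted in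
the computation (the label `f(v)`, the labels `f(u)` of the upper covers `u` of `v` in
`P̂`, and the sum of their inverses) is nonzero. -/
def ncODef (C : S) (v : P) (f : P → S) : Prop :=
  f v ≠ 0 ∧ (∀ u : P, v ⋖ u → f u ≠ 0) ∧ (IsMax v → C ≠ 0) ∧ uInvSum C f v ≠ 0

/-- The element `∑ g(y_{c-1})⋯g(y₁) · g(y_k)⋯g(y_c)` inverted by the noncommutative
antichain toggle `τ_v`, summed over all maximal chains `0̂ ⋖ y₁ ⋖ ⋯ ⋖ y_k ⋖ 1̂` of `P̂`
with `y_c = v` (indices decrease by 1 within each factor). -/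
noncomputable def tauDenom (g : P → S) (v : P) : S :=
  ∑ k ∈ range (Fintype.card P),
    ∑ c ∈ univ.filter (fun c : Fin (k + 1) → P => MaxChain c),
      ∑ j ∈ univ.filter (fun j : Fin (k + 1) => c j = v),
        (((List.ofFn (g ∘ c)).take j.1).reverse).prod *
          (((List.ofFn (g ∘ c)).drop j.1).reverse).prod

/-- The element `∑ g(y_c)⋯g(y₁) · g(y_k)⋯g(y_{c+1})` inverted by the noncommutative
antichain elggot `ε_v`, summed over all maximal chains `0̂ ⋖ y₁ ⋖ ⋯ ⋖ y_k ⋖ 1̂` of `P̂`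
with `y_c = v`. -/
noncomputable def epsDenom (g : P → S) (v : P) : S :=
  ∑ k ∈ range (Fintype.card P),
    ∑ c ∈ univ.filter (fun c : Fin (k + 1) → P => MaxChain c),
      ∑ j ∈ univ.filter (fun j : Fin (k + 1) => c j = v),
        (((List.ofFn (g ∘ c)).take (j.1 + 1)).reverse).prod *
          (((List.ofFn (g ∘ c)).drop (j.1 + 1)).reverse).prod

/-- The noncommutative antichain toggle `τ_v`: it replaces the label at `v` by
`C · (∑ g(y_{c-1})⋯g(y₁) · g(y_k)⋯g(y_c))⁻¹` and fixes all other labels. -/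
noncomputable def ncTau (C : S) (v : P) (g : P → S) : P → S :=
  fun x => if x = v then C * (tauDenom g v)⁻¹ else g x

/-- The noncommutative antichain elggot `ε_v`: it replaces the label at `v` by
`C · (∑ g(y_c)⋯g(y₁) · g(y_k)⋯g(y_{c+1}))⁻¹` and fixes all other labels. -/
noncomputable def ncEps (C : S) (v : P) (g : P → S) : P → S :=
  fun x => if x = v then C * (epsDenom g v)⁻¹ else g x

/-- The noncommutative complement `Θ`: `(Θf)(x) = C · f(x)⁻¹`. -/
noncomputable def ncTheta (C : S) (f : P → S) : P → S := fun x => C * (f x)⁻¹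

/-- The noncommutative down transfer `∇`:
`(∇f)(x) = f(x) · (∑_{y ∈ P̂, y ⋖ x} f(y))⁻¹` with `f(0̂) = 1`. -/
noncomputable def ncNabla (f : P → S) : P → S := fun x => f x * (lSum f x)⁻¹

/-- The noncommutative inverse up transfer `Δ⁻¹`:
`(Δ⁻¹f)(x) = ∑ f(y_k)⋯f(y₂)f(y₁)` over all saturated chains
`x = y₁ ⋖ y₂ ⋖ ⋯ ⋖ y_k ⋖ 1̂` in `P̂`. -/
noncomputable def ncDeltaInv (f : P → S) : P → S := fun x =>
  ∑ k ∈ range (Fintype.card P),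
    ∑ c ∈ univ.filter (fun c : Fin (k + 1) → P =>
        SatChain c ∧ c 0 = x ∧ IsMax (c (Fin.last k))),
      ((List.ofFn (f ∘ c)).reverse).prod

/-- The noncommutative inverse down transfer `∇⁻¹`:
`(∇⁻¹f)(x) = ∑ f(y_k)⋯f(y₂)f(y₁)` over all saturated chains
`0̂ ⋖ y₁ ⋖ y₂ ⋖ ⋯ ⋖ y_k = x` in `P̂`. -/
noncomputable def ncNablaInv (f : P → S) : P → S := fun x =>
  ∑ k ∈ range (Fintype.card P),
    ∑ c ∈ univ.filter (fun c : Fin (k + 1) → P =>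
        SatChain c ∧ IsMin (c 0) ∧ c (Fin.last k) = x),
      ((List.ofFn (f ∘ c)).reverse).prod

/-- `l` is a linear extension of `P`: it lists every element of `P` exactly once, and
`l[i] < l[j]` in `P` implies `i < j`. -/
def IsLinearExtension {P : Type*} [PartialOrder P] (l : List P) : Prop :=
  l.Nodup ∧ (∀ x : P, x ∈ l) ∧
    ∀ (i j : ℕ) (hi : i < l.length) (hj : j < l.length), l[i]'hi < l[j]'hj → i < j

/-- `l` is a linear extension of the subposet `A` of `P`. -/
def IsLinearExtensionOn {P : Type*} [PartialOrder P] (A : Set P) (l : List P) : Prop :=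
  l.Nodup ∧ (∀ x : P, x ∈ l ↔ x ∈ A) ∧
    ∀ (i j : ℕ) (hi : i < l.length) (hj : j < l.length), l[i]'hi < l[j]'hj → i < j

/-- An order toggle (`T`) or order elggot (`E`) operation. -/
inductive OOp (P : Type*) where
  | T : P → OOp P
  | E : P → OOp P

/-- The poset element at which an operation acts. -/
def OOp.el {P : Type*} : OOp P → P
  | .T v => v
  | .E v => v

/-- Apply one order toggle/elggot operation. -/
noncomputable def applyOOp (C : S) : OOp P → (P → S) → (P → S)
  | .T v => ncT C v
  | .E v => ncE C v

/-- Apply a sequence of order toggle/elggot operations, first element of the list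
applied first. -/
noncomputable def applyOOps (C : S) (l : List (OOp P)) (f : P → S) : P → S :=
  l.foldl (fun h o => applyOOp C o h) f

/-- Stepwise definedness of applying a sequence of order toggle/elggot operations:
every element inverted in the computation is nonzero. -/
def OOpsDef (C : S) : List (OOp P) → (P → S) → Prop
  | [], _ => True
  | o :: l, f => ncODef C o.el f ∧ OOpsDef C l (applyOOp C o f)

/-- The sequence of operations realizing `τ_v* = η_v ∘ T_v ∘ η_v⁻¹`, listed in order of
application: first `η_v⁻¹ = E_{x_k} ∘ ⋯ ∘ E_{x₁}` (so `E_{x₁}` first), then `T_v`, then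
`η_v = T_{x₁} ∘ ⋯ ∘ T_{x_k}` (so `T_{x_k}` first), where `le = (x₁,…,x_k)` is a linear
extension of `{x ∈ P : x < v}`. -/
def tauStarOps {P : Type*} (v : P) (le : List P) : List (OOp P) :=
  le.map OOp.E ++ [OOp.T v] ++ (le.reverse).map OOp.T

/-- The sequence of operations realizing `ε_v* = η_v ∘ E_v ∘ η_v⁻¹`, listed in order of
application. -/
def epsStarOps {P : Type*} (v : P) (le : List P) : List (OOp P) :=
  le.map OOp.E ++ [OOp.E v] ++ (le.reverse).map OOp.T

namespace NC
set_option linter.unusedSectionVars false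
set_option maxHeartbeats 1000000
variable {P : Type*} [Fintype P] [PartialOrder P] {S : Type*} [DivisionRing S]

lemma satChain_strictMono {k : ℕ} {c : Fin (k+1) → P} (hc : SatChain c) : StrictMono c :=
  Fin.strictMono_iff_lt_succ.2 fun i => (hc i).lt

lemma satChain_covBy {k : ℕ} {c : Fin (k+1) → P} (hc : SatChain c) (i : ℕ) (h : i < k) :
    c ⟨i, by omega⟩ ⋖ c ⟨i+1, by omega⟩ := hc ⟨i, h⟩

lemma satChain_of_nat {k : ℕ} {c : Fin (k+1) → P}
    (h : ∀ i : ℕ, (hi : i < k) → c ⟨i, by omega⟩ ⋖ c ⟨i+1, by omega⟩) : SatChain c :=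
  fun i => h i.1 i.2

lemma satChain_card {k : ℕ} {c : Fin (k+1) → P} (hc : SatChain c) :
    k + 1 ≤ Fintype.card P := by
  have := Fintype.card_le_of_injective c (satChain_strictMono hc).injective
  simpa using this

lemma satChain_card' {k : ℕ} {c : Fin (k+1) → P} (hc : SatChain c) {z : P}
    (hz : ∀ i, c i ≠ z) : k + 2 ≤ Fintype.card P := by
  classical
  have hinj := (satChain_strictMono hc).injective
  have himg : (Finset.image c Finset.univ).card = k + 1 := by
    rw [Finset.card_image_of_injective _ hinj]; simp
  have hzmem : z ∉ Finset.image c Finset.univ := by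
    simp only [Finset.mem_image]; rintro ⟨i, -, rfl⟩; exact hz i rfl
  have := Finset.card_le_card (Finset.subset_univ (insert z (Finset.image c Finset.univ)))
  rw [Finset.card_insert_of_notMem hzmem, himg] at this
  have h2 : k + 1 < Fintype.card P := by simpa [Finset.card_univ] using this
  omega

lemma satChain_one (c : Fin 1 → P) : SatChain c := fun i => i.elim0

lemma satChain_cons {k : ℕ} (x : P) (c : Fin (k+1) → P) :
    SatChain (Fin.cons x c) ↔ x ⋖ c 0 ∧ SatChain c := by
  constructor
  · intro h
    refine ⟨by simpa using h 0, fun i => ?_⟩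
    have := h i.succ
    rwa [← Fin.succ_castSucc, Fin.cons_succ, Fin.cons_succ] at this
  · rintro ⟨h0, h1⟩ i
    refine Fin.cases ?_ (fun j => ?_) i
    · simpa using h0
    · rw [← Fin.succ_castSucc, Fin.cons_succ, Fin.cons_succ]; exact h1 j

lemma satChain_snoc {k : ℕ} (x : P) (c : Fin (k+1) → P) :
    SatChain (Fin.snoc c x) ↔ SatChain c ∧ c (Fin.last k) ⋖ x := by
  constructor
  · intro h
    refine ⟨fun i => ?_, ?_⟩
    · have := h i.castSucc
      rwa [Fin.succ_castSucc, Fin.snoc_castSucc, Fin.snoc_castSucc] at this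
    · have := h (Fin.last k)
      rwa [Fin.succ_last, Fin.snoc_last, Fin.snoc_castSucc] at this
  · rintro ⟨h1, h2⟩ i
    refine Fin.lastCases ?_ (fun j => ?_) i
    · rw [Fin.succ_last, Fin.snoc_last, Fin.snoc_castSucc]; exact h2
    · rw [Fin.succ_castSucc, Fin.snoc_castSucc, Fin.snoc_castSucc]; exact h1 j

lemma ofFn_comp_cons {k : ℕ} (g : P → S) (x : P) (c : Fin (k+1) → P) :
    List.ofFn (g ∘ Fin.cons x c) = g x :: List.ofFn (g ∘ c) := by
  rw [List.ofFn_succ]; simp [Function.comp]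

lemma ofFn_comp_snoc {k : ℕ} (g : P → S) (x : P) (c : Fin (k+1) → P) :
    List.ofFn (g ∘ Fin.snoc c x) = List.ofFn (g ∘ c) ++ [g x] := by
  rw [List.ofFn_succ']; simp [Function.comp, List.concat_eq_append]

open Finset in
/-- decompose sums over chains starting at `x` by removing the first element. -/
lemma sum_chain_cons {k : ℕ} (x : P) (Q : P → Prop) (F : (Fin (k+2) → P) → S) :
    ∑ c ∈ univ.filter (fun c : Fin (k+2) → P => SatChain c ∧ c 0 = x ∧ Q (c (Fin.last (k+1)))),
      F c
    = ∑ y ∈ univ.filter (fun y => x ⋖ y),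
        ∑ c ∈ univ.filter (fun c : Fin (k+1) → P => SatChain c ∧ c 0 = y ∧ Q (c (Fin.last k))),
          F (Fin.cons x c) := by
  classical
  have step2 : ∀ y ∈ univ.filter (fun y => x ⋖ y),
      ∑ c ∈ univ.filter (fun c : Fin (k+1) → P => SatChain c ∧ c 0 = y ∧ Q (c (Fin.last k))),
        F (Fin.cons x c)
      = ∑ c ∈ (univ.filter (fun c : Fin (k+1) → P =>
          SatChain c ∧ x ⋖ c 0 ∧ Q (c (Fin.last k)))).filter (fun c => c 0 = y),
        F (Fin.cons x c) := by
    intro y hy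
    simp only [mem_filter, mem_univ, true_and] at hy
    apply Finset.sum_congr _ (fun _ _ => rfl)
    ext c
    simp only [mem_filter, mem_univ, true_and]
    constructor
    · rintro ⟨h1, h2, h3⟩; exact ⟨⟨h1, h2 ▸ hy, h3⟩, h2⟩
    · rintro ⟨⟨h1, h2, h3⟩, h4⟩; exact ⟨h1, h4, h3⟩
  rw [Finset.sum_congr rfl step2,
    Finset.sum_fiberwise_of_maps_to (g := fun c : Fin (k+1) → P => c 0)
      (fun c hc => by simp only [mem_filter, mem_univ, true_and] at hc ⊢; exact hc.2.1)]
  refine Finset.sum_nbij' (fun c => Fin.tail c) (fun c => Fin.cons x c) ?_ ?_ ?_ ?_ ?_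
  · intro c hc
    simp only [mem_filter, mem_univ, true_and] at hc ⊢
    obtain ⟨h1, h2, h3⟩ := hc
    have hc' : c = Fin.cons x (Fin.tail c) := by
      rw [← h2]; exact (Fin.cons_self_tail c).symm
    rw [hc'] at h1
    rw [satChain_cons] at h1
    refine ⟨h1.2, by simpa using h1.1, ?_⟩
    show Q (c (Fin.last k).succ)
    rw [Fin.succ_last]; exact h3
  · intro c hc
    simp only [mem_filter, mem_univ, true_and] at hc ⊢
    obtain ⟨h1, h2, h3⟩ := hc
    refine ⟨(satChain_cons x c).2 ⟨h2, h1⟩, @Fin.cons_zero (k+1) (fun _ => P) x c, ?_⟩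
    rw [← Fin.succ_last, Fin.cons_succ]; exact h3
  · intro c hc
    simp only [mem_filter, mem_univ, true_and] at hc
    rw [← hc.2.1]; exact Fin.cons_self_tail c
  · intro c hc
    simp
  · intro c hc
    simp only [mem_filter, mem_univ, true_and] at hc
    rw [← hc.2.1, Fin.cons_self_tail c]


open Finset in
/-- decompose sums over chains ending at `x` by removing the last element. -/
lemma sum_chain_snoc {k : ℕ} (x : P) (Q : P → Prop) (F : (Fin (k+2) → P) → S) :
    ∑ c ∈ univ.filter (fun c : Fin (k+2) → P => SatChain c ∧ Q (c 0) ∧ c (Fin.last (k+1)) = x),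
      F c
    = ∑ y ∈ univ.filter (fun y => y ⋖ x),
        ∑ c ∈ univ.filter (fun c : Fin (k+1) → P => SatChain c ∧ Q (c 0) ∧ c (Fin.last k) = y),
          F (Fin.snoc c x) := by
  classical
  have step2 : ∀ y ∈ univ.filter (fun y => y ⋖ x),
      ∑ c ∈ univ.filter (fun c : Fin (k+1) → P => SatChain c ∧ Q (c 0) ∧ c (Fin.last k) = y),
        F (Fin.snoc c x)
      = ∑ c ∈ (univ.filter (fun c : Fin (k+1) → P =>
          SatChain c ∧ Q (c 0) ∧ c (Fin.last k) ⋖ x)).filter (fun c => c (Fin.last k) = y),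
        F (Fin.snoc c x) := by
    intro y hy
    simp only [mem_filter, mem_univ, true_and] at hy
    apply Finset.sum_congr _ (fun _ _ => rfl)
    ext c
    simp only [mem_filter, mem_univ, true_and]
    constructor
    · rintro ⟨h1, h2, h3⟩; exact ⟨⟨h1, h2, h3 ▸ hy⟩, h3⟩
    · rintro ⟨⟨h1, h2, h3⟩, h4⟩; exact ⟨h1, h2, h4⟩
  rw [Finset.sum_congr rfl step2,
    Finset.sum_fiberwise_of_maps_to (g := fun c : Fin (k+1) → P => c (Fin.last k))
      (fun c hc => by simp only [mem_filter, mem_univ, true_and] at hc ⊢; exact hc.2.2)]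
  refine Finset.sum_nbij' (fun c => Fin.init c) (fun c => Fin.snoc c x) ?_ ?_ ?_ ?_ ?_
  · intro c hc
    simp only [mem_filter, mem_univ, true_and] at hc ⊢
    obtain ⟨h1, h2, h3⟩ := hc
    have hc' : c = Fin.snoc (Fin.init c) (c (Fin.last (k+1))) := (Fin.snoc_init_self c).symm
    rw [h3] at hc'
    rw [hc'] at h1
    rw [satChain_snoc] at h1
    refine ⟨h1.1, ?_, h1.2⟩
    show Q (c (0 : Fin (k+1)).castSucc)
    rwa [Fin.castSucc_zero]
  · intro c hc
    simp only [mem_filter, mem_univ, true_and] at hc ⊢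
    obtain ⟨h1, h2, h3⟩ := hc
    refine ⟨(satChain_snoc x c).2 ⟨h1, h3⟩, ?_, @Fin.snoc_last (k+1) (fun _ => P) x c⟩
    have h0 : Fin.snoc (α := fun _ => P) c x 0 = c 0 := by
      rw [← Fin.castSucc_zero, Fin.snoc_castSucc]
    rw [h0]; exact h2
  · intro c hc
    simp only [mem_filter, mem_univ, true_and] at hc
    rw [← hc.2.2]; exact Fin.snoc_init_self c
  · intro c hc
    simp
  · intro c hc
    simp only [mem_filter, mem_univ, true_and] at hc
    rw [← hc.2.2, Fin.snoc_init_self c]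


open Finset

/-- `M g x = [x maximal] + ∑_{y ⋗ x} (Δ⁻¹ g)(y)`. -/
noncomputable def Mfun (g : P → S) (x : P) : S :=
  (if IsMax x then 1 else 0) + ∑ y ∈ univ.filter (fun y => x ⋖ y), ncDeltaInv g y

/-- `W g x = [x minimal] + ∑_{y ⋖ x} (∇⁻¹ g)(y)`. -/
noncomputable def Wfun (g : P → S) (x : P) : S :=
  (if IsMin x then 1 else 0) + ∑ y ∈ univ.filter (fun y => y ⋖ x), ncNablaInv g y

lemma deltaInv_rec (g : P → S) (x : P) : ncDeltaInv g x = Mfun g x * g x := by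
  classical
  have hx : Nonempty P := ⟨x⟩
  have hN : 1 ≤ Fintype.card P := Fintype.card_pos
  show (∑ k ∈ range (Fintype.card P), ∑ c ∈ univ.filter (fun c : Fin (k + 1) → P =>
      SatChain c ∧ c 0 = x ∧ IsMax (c (Fin.last k))), ((List.ofFn (g ∘ c)).reverse).prod)
    = Mfun g x * g x
  rw [show Fintype.card P = (Fintype.card P - 1) + 1 from (Nat.succ_pred_eq_of_pos hN).symm,
    Finset.sum_range_succ']
  have hzero : (∑ c ∈ univ.filter (fun c : Fin (0+1) → P =>
      SatChain c ∧ c 0 = x ∧ IsMax (c (Fin.last 0))), ((List.ofFn (g ∘ c)).reverse).prod)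
      = if IsMax x then g x else 0 := by
    by_cases hmax : IsMax x
    · rw [if_pos hmax]
      have hfilter : univ.filter (fun c : Fin (0+1) → P =>
          SatChain c ∧ c 0 = x ∧ IsMax (c (Fin.last 0))) = {fun _ => x} := by
        ext c
        simp only [mem_filter, mem_univ, true_and, mem_singleton]
        constructor
        · rintro ⟨-, h2, -⟩
          funext i
          rw [show i = 0 from Fin.ext (by omega), h2]
        · rintro rfl
          exact ⟨satChain_one _, rfl, hmax⟩
      rw [hfilter, Finset.sum_singleton]
      simp
    · rw [if_neg hmax]
      apply Finset.sum_eq_zero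
      intro c hc
      simp only [mem_filter, mem_univ, true_and] at hc
      obtain ⟨-, h2, h3⟩ := hc
      rw [show Fin.last 0 = (0 : Fin 1) from rfl, h2] at h3
      exact absurd h3 hmax
  have hstep : ∀ k : ℕ, (∑ c ∈ univ.filter (fun c : Fin (k+1+1) → P =>
      SatChain c ∧ c 0 = x ∧ IsMax (c (Fin.last (k+1)))), ((List.ofFn (g ∘ c)).reverse).prod)
      = (∑ y ∈ univ.filter (fun y => x ⋖ y), ∑ c ∈ univ.filter (fun c : Fin (k+1) → P =>
          SatChain c ∧ c 0 = y ∧ IsMax (c (Fin.last k))),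
          ((List.ofFn (g ∘ c)).reverse).prod) * g x := by
    intro k
    rw [sum_chain_cons x IsMax]
    simp_rw [ofFn_comp_cons, List.reverse_cons, List.prod_append, List.prod_cons,
      List.prod_nil, mul_one, ← Finset.sum_mul]
  simp_rw [hstep, hzero, ← Finset.sum_mul]
  rw [Finset.sum_comm]
  have hinner : ∀ y ∈ univ.filter (fun y => x ⋖ y),
      (∑ k ∈ range (Fintype.card P - 1), ∑ c ∈ univ.filter (fun c : Fin (k+1) → P =>
        SatChain c ∧ c 0 = y ∧ IsMax (c (Fin.last k))), ((List.ofFn (g ∘ c)).reverse).prod)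
      = ncDeltaInv g y := by
    intro y hy
    simp only [mem_filter, mem_univ, true_and] at hy
    show _ = (∑ k ∈ range (Fintype.card P), ∑ c ∈ univ.filter (fun c : Fin (k + 1) → P =>
      SatChain c ∧ c 0 = y ∧ IsMax (c (Fin.last k))), ((List.ofFn (g ∘ c)).reverse).prod)
    rw [show Fintype.card P = (Fintype.card P - 1) + 1 from (Nat.succ_pred_eq_of_pos hN).symm,
      Finset.sum_range_succ]
    have htop : (∑ c ∈ univ.filter (fun c : Fin (Fintype.card P - 1 + 1) → P =>
        SatChain c ∧ c 0 = y ∧ IsMax (c (Fin.last (Fintype.card P - 1)))),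
        ((List.ofFn (g ∘ c)).reverse).prod) = 0 := by
      apply Finset.sum_eq_zero
      intro c hc
      simp only [mem_filter, mem_univ, true_and] at hc
      exfalso
      have hcard := satChain_card' hc.1 (z := x) (fun i => ?_)
      · omega
      · have : c 0 ≤ c i := (satChain_strictMono hc.1).monotone (Fin.zero_le i)
        rw [hc.2.1] at this
        exact (lt_of_lt_of_le hy.lt this).ne'
    rw [htop, add_zero]
    rfl
  rw [Finset.sum_congr rfl hinner, Mfun, add_mul, ite_mul, one_mul, zero_mul, add_comm]

lemma nablaInv_rec (g : P → S) (x : P) : ncNablaInv g x = g x * Wfun g x := by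
  classical
  have hx : Nonempty P := ⟨x⟩
  have hN : 1 ≤ Fintype.card P := Fintype.card_pos
  show (∑ k ∈ range (Fintype.card P), ∑ c ∈ univ.filter (fun c : Fin (k + 1) → P =>
      SatChain c ∧ IsMin (c 0) ∧ c (Fin.last k) = x), ((List.ofFn (g ∘ c)).reverse).prod)
    = g x * Wfun g x
  rw [show Fintype.card P = (Fintype.card P - 1) + 1 from (Nat.succ_pred_eq_of_pos hN).symm,
    Finset.sum_range_succ']
  have hzero : (∑ c ∈ univ.filter (fun c : Fin (0+1) → P =>
      SatChain c ∧ IsMin (c 0) ∧ c (Fin.last 0) = x), ((List.ofFn (g ∘ c)).reverse).prod)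
      = if IsMin x then g x else 0 := by
    by_cases hmin : IsMin x
    · rw [if_pos hmin]
      have hfilter : univ.filter (fun c : Fin (0+1) → P =>
          SatChain c ∧ IsMin (c 0) ∧ c (Fin.last 0) = x) = {fun _ => x} := by
        ext c
        simp only [mem_filter, mem_univ, true_and, mem_singleton]
        constructor
        · rintro ⟨-, -, h3⟩
          funext i
          rw [show i = Fin.last 0 from Fin.ext (by omega), h3]
        · rintro rfl
          exact ⟨satChain_one _, hmin, rfl⟩
      rw [hfilter, Finset.sum_singleton]
      simp
    · rw [if_neg hmin]
      apply Finset.sum_eq_zero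
      intro c hc
      simp only [mem_filter, mem_univ, true_and] at hc
      obtain ⟨-, h2, h3⟩ := hc
      rw [show (0 : Fin 1) = Fin.last 0 from rfl, h3] at h2
      exact absurd h2 hmin
  have hstep : ∀ k : ℕ, (∑ c ∈ univ.filter (fun c : Fin (k+1+1) → P =>
      SatChain c ∧ IsMin (c 0) ∧ c (Fin.last (k+1)) = x), ((List.ofFn (g ∘ c)).reverse).prod)
      = g x * (∑ y ∈ univ.filter (fun y => y ⋖ x), ∑ c ∈ univ.filter (fun c : Fin (k+1) → P =>
          SatChain c ∧ IsMin (c 0) ∧ c (Fin.last k) = y),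
          ((List.ofFn (g ∘ c)).reverse).prod) := by
    intro k
    rw [sum_chain_snoc x IsMin]
    simp_rw [ofFn_comp_snoc, List.reverse_append, List.reverse_cons, List.reverse_nil,
      List.nil_append, List.singleton_append, List.prod_cons, ← Finset.mul_sum]
  simp_rw [hstep, hzero, ← Finset.mul_sum]
  rw [Finset.sum_comm]
  have hinner : ∀ y ∈ univ.filter (fun y => y ⋖ x),
      (∑ k ∈ range (Fintype.card P - 1), ∑ c ∈ univ.filter (fun c : Fin (k+1) → P =>
        SatChain c ∧ IsMin (c 0) ∧ c (Fin.last k) = y), ((List.ofFn (g ∘ c)).reverse).prod)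
      = ncNablaInv g y := by
    intro y hy
    simp only [mem_filter, mem_univ, true_and] at hy
    show _ = (∑ k ∈ range (Fintype.card P), ∑ c ∈ univ.filter (fun c : Fin (k + 1) → P =>
      SatChain c ∧ IsMin (c 0) ∧ c (Fin.last k) = y), ((List.ofFn (g ∘ c)).reverse).prod)
    rw [show Fintype.card P = (Fintype.card P - 1) + 1 from (Nat.succ_pred_eq_of_pos hN).symm,
      Finset.sum_range_succ]
    have htop : (∑ c ∈ univ.filter (fun c : Fin (Fintype.card P - 1 + 1) → P =>
        SatChain c ∧ IsMin (c 0) ∧ c (Fin.last (Fintype.card P - 1)) = y),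
        ((List.ofFn (g ∘ c)).reverse).prod) = 0 := by
      apply Finset.sum_eq_zero
      intro c hc
      simp only [mem_filter, mem_univ, true_and] at hc
      exfalso
      have hcard := satChain_card' hc.1 (z := x) (fun i => ?_)
      · omega
      · have : c i ≤ c (Fin.last _) := (satChain_strictMono hc.1).monotone (Fin.le_last i)
        rw [hc.2.2] at this
        exact (lt_of_le_of_lt this hy.lt).ne
    rw [htop, add_zero]
    rfl
  rw [Finset.sum_congr rfl hinner, Wfun, mul_add, mul_ite, mul_one, mul_zero, add_comm]


open Finset

/-- glue a chain ending at `v` with a chain starting at `v`. -/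
def glue {a b : ℕ} (d : Fin (a+1) → P) (e : Fin (b+1) → P) : Fin (a+b+1) → P :=
  fun i => if h : i.1 < a then d ⟨i.1, by omega⟩ else e ⟨i.1 - a, by omega⟩

lemma glue_lt {a b : ℕ} {d : Fin (a+1) → P} {e : Fin (b+1) → P} {i : Fin (a+b+1)}
    (h : i.1 < a) : glue d e i = d ⟨i.1, by omega⟩ := dif_pos h

lemma glue_ge {a b : ℕ} {d : Fin (a+1) → P} {e : Fin (b+1) → P} {i : Fin (a+b+1)}
    (h : a ≤ i.1) : glue d e i = e ⟨i.1 - a, by omega⟩ := dif_neg (by omega)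

lemma glue_le {a b : ℕ} {d : Fin (a+1) → P} {e : Fin (b+1) → P}
    (hde : d (Fin.last a) = e 0) {i : Fin (a+b+1)} (h : i.1 ≤ a) :
    glue d e i = d ⟨i.1, by omega⟩ := by
  rcases lt_or_eq_of_le h with h' | h'
  · exact glue_lt h'
  · rw [glue_ge (le_of_eq h'.symm)]
    have h1 : (⟨i.1 - a, by omega⟩ : Fin (b+1)) = 0 := Fin.ext (by simp [h'])
    have h2 : (⟨i.1, by omega⟩ : Fin (a+1)) = Fin.last a := Fin.ext (by simp [h'])
    rw [h1, h2, hde]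

lemma split_fixed (g : P → S) (v : P) (a b : ℕ) (φ ψ : List S → S) :
    ∑ c ∈ univ.filter (fun c : Fin (a+b+1) → P => MaxChain c ∧ c ⟨a, by omega⟩ = v),
      φ ((List.ofFn (g ∘ c)).take a) * ψ ((List.ofFn (g ∘ c)).drop a)
    = (∑ d ∈ univ.filter (fun d : Fin (a+1) → P =>
          SatChain d ∧ IsMin (d 0) ∧ d (Fin.last a) = v), φ ((List.ofFn (g ∘ d)).take a))
      * (∑ e ∈ univ.filter (fun e : Fin (b+1) → P =>
          SatChain e ∧ e 0 = v ∧ IsMax (e (Fin.last b))), ψ (List.ofFn (g ∘ e))) := by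
  classical
  rw [Finset.sum_mul_sum, ← Finset.sum_product']
  refine Finset.sum_nbij'
    (fun c => ((fun i : Fin (a+1) => c ⟨i.1, by omega⟩), (fun i : Fin (b+1) => c ⟨a + i.1, by omega⟩)))
    (fun p => glue p.1 p.2) ?_ ?_ ?_ ?_ ?_
  · intro c hc
    simp only [mem_filter, mem_univ, true_and, Finset.mem_product] at hc ⊢
    obtain ⟨⟨hsat, hmin, hmax⟩, hv⟩ := hc
    refine ⟨⟨satChain_of_nat fun i hi => satChain_covBy hsat i (by omega), ?_, hv⟩,
            satChain_of_nat fun i hi => satChain_covBy hsat (a + i) (by omega), ?_, ?_⟩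
    · have : (⟨(0 : Fin (a+1)).1, by omega⟩ : Fin (a+b+1)) = 0 := Fin.ext (by simp)
      rwa [this]
    · have : (⟨a + (0 : Fin (b+1)).1, by omega⟩ : Fin (a+b+1)) = ⟨a, by omega⟩ := Fin.ext (by simp)
      rwa [this]
    · have : (⟨a + (Fin.last b).1, by omega⟩ : Fin (a+b+1)) = Fin.last (a+b) := Fin.ext rfl
      rwa [this]
  · intro p hp
    simp only [mem_filter, mem_univ, true_and, Finset.mem_product] at hp ⊢
    obtain ⟨⟨hd1, hd2, hd3⟩, he1, he2, he3⟩ := hp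
    have hde : p.1 (Fin.last a) = p.2 0 := by rw [hd3, he2]
    constructor
    constructor
    · refine satChain_of_nat fun i hi => ?_
      by_cases h : i + 1 ≤ a
      · rw [glue_le hde (show i ≤ a by omega), glue_le hde (show i + 1 ≤ a by omega)]
        exact satChain_covBy hd1 i (by omega)
      · rw [glue_ge (show (a:ℕ) ≤ i by omega), glue_ge (show (a:ℕ) ≤ i + 1 by omega)]
        have : (⟨i + 1 - a, by omega⟩ : Fin (b+1)) = ⟨(i - a) + 1, by omega⟩ :=
          Fin.ext (show i + 1 - a = (i - a) + 1 by omega)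
        rw [this]
        exact satChain_covBy he1 (i - a) (by omega)
    constructor
    · rw [glue_le hde (show ((0 : Fin (a+b+1)) : ℕ) ≤ a by simp)]
      have : (⟨(0 : Fin (a+b+1)).1, by simp⟩ : Fin (a+1)) = 0 := Fin.ext (by simp)
      rwa [this]
    · rw [glue_ge (show a ≤ (Fin.last (a+b)).1 by simp)]
      have : (⟨(Fin.last (a+b)).1 - a, by simp only [Fin.val_last]; omega⟩ : Fin (b+1)) = Fin.last b := by
        apply Fin.ext; simp only [Fin.val_last]; omega
      rwa [this]
    · rw [glue_ge (le_refl a)]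
      have : (⟨a - a, by omega⟩ : Fin (b+1)) = 0 := Fin.ext (by simp)
      rwa [this]
  · intro c hc
    funext i
    show glue (fun i : Fin (a+1) => c ⟨i.1, by omega⟩) (fun i : Fin (b+1) => c ⟨a + i.1, by omega⟩) i
      = c i
    by_cases h : i.1 < a
    · rw [glue_lt h]
    · rw [glue_ge (show a ≤ i.1 by omega)]
      exact congrArg c (Fin.ext (show a + (i.1 - a) = i.1 by omega))
  · intro p hp
    simp only [mem_filter, mem_univ, true_and, Finset.mem_product] at hp
    obtain ⟨⟨hd1, hd2, hd3⟩, he1, he2, he3⟩ := hp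
    have hde : p.1 (Fin.last a) = p.2 0 := by rw [hd3, he2]
    have c1 : (fun i : Fin (a+1) => glue p.1 p.2 ⟨i.1, by omega⟩) = p.1 := by
      funext i
      rw [glue_le hde (show i.1 ≤ a by omega)]
    have c2 : (fun i : Fin (b+1) => glue p.1 p.2 ⟨a + i.1, by omega⟩) = p.2 := by
      funext i
      rw [glue_ge (show a ≤ a + i.1 by omega)]
      exact congrArg p.2 (Fin.ext (show a + i.1 - a = i.1 by omega))
    rw [Prod.ext_iff]
    exact ⟨c1, c2⟩
  · intro c hc
    congr 1
    · congr 1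
      refine List.ext_getElem (by simp only [List.length_take, List.length_ofFn]; omega)
        fun i h1 h2 => ?_
      simp only [List.getElem_take, List.getElem_ofFn, Function.comp_apply]
    · congr 1
      refine List.ext_getElem (by simp only [List.length_drop, List.length_ofFn]; omega)
        fun i h1 h2 => ?_
      simp only [List.getElem_drop, List.getElem_ofFn, Function.comp_apply]


open Finset


lemma deltaInv_congr {g g2 : P → S} {x : P} (h : ∀ z, x ≤ z → g z = g2 z) :
    ncDeltaInv g x = ncDeltaInv g2 x := by
  refine Finset.sum_congr rfl fun k _ => Finset.sum_congr rfl fun c hc => ?_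
  simp only [mem_filter, mem_univ, true_and] at hc
  have : g ∘ c = g2 ∘ c := funext fun i =>
    h _ (hc.2.1 ▸ (satChain_strictMono hc.1).monotone (Fin.zero_le i))
  rw [this]

lemma triangle_sum {N : ℕ} (G : ℕ → ℕ → S) (hG : ∀ k j, N ≤ k → G k j = 0) :
    ∑ k ∈ range N, ∑ j ∈ range (k+1), G k j = ∑ a ∈ range N, ∑ b ∈ range N, G (a+b) a := by
  have h1 : ∀ a ∈ range N, ∑ b ∈ range N, G (a+b) a = ∑ k ∈ Ico a N, G k a := by
    intro a ha
    rw [Finset.sum_Ico_eq_sum_range]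
    exact (Finset.sum_subset (Finset.range_subset_range.2 (by omega))
      (fun b _ hbs => hG (a+b) a (by simp only [mem_range, not_lt] at hbs; omega))).symm
  rw [Finset.sum_congr rfl h1]
  exact (Finset.sum_comm' (s := range N) (t := fun a => Ico a N) (t' := range N)
    (s' := fun k => range (k+1))
    (by intro a k; simp only [mem_range, mem_Ico]; omega)).symm

/-- The master splitting identity for sums over maximal chains through `v`. -/
lemma sum_maxChain_split (g : P → S) (v : P) (φ ψ : List S → S) :
    (∑ k ∈ range (Fintype.card P),
      ∑ c ∈ univ.filter (fun c : Fin (k + 1) → P => MaxChain c),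
        ∑ j ∈ univ.filter (fun j : Fin (k + 1) => c j = v),
          φ ((List.ofFn (g ∘ c)).take j.1) * ψ ((List.ofFn (g ∘ c)).drop j.1))
    = (∑ a ∈ range (Fintype.card P),
        ∑ d ∈ univ.filter (fun d : Fin (a+1) → P =>
          SatChain d ∧ IsMin (d 0) ∧ d (Fin.last a) = v), φ ((List.ofFn (g ∘ d)).take a))
      * (∑ b ∈ range (Fintype.card P),
        ∑ e ∈ univ.filter (fun e : Fin (b+1) → P =>
          SatChain e ∧ e 0 = v ∧ IsMax (e (Fin.last b))), ψ (List.ofFn (g ∘ e))) := by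
  classical
  set N := Fintype.card P with hNdef
  set G : ℕ → ℕ → S := fun k j =>
    if h : j < k + 1 then
      (∑ c ∈ univ.filter (fun c : Fin (k+1) → P => MaxChain c ∧ c ⟨j, h⟩ = v),
        φ ((List.ofFn (g ∘ c)).take j) * ψ ((List.ofFn (g ∘ c)).drop j))
    else 0 with hGdef
  have hL : ∀ k, (∑ c ∈ univ.filter (fun c : Fin (k + 1) → P => MaxChain c),
        ∑ j ∈ univ.filter (fun j : Fin (k + 1) => c j = v),
          φ ((List.ofFn (g ∘ c)).take j.1) * ψ ((List.ofFn (g ∘ c)).drop j.1))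
      = ∑ j ∈ range (k+1), G k j := by
    intro k
    rw [← Fin.sum_univ_eq_sum_range (fun j => G k j) (k+1)]
    have hin : ∀ c ∈ univ.filter (fun c : Fin (k+1) → P => MaxChain c),
        (∑ j ∈ univ.filter (fun j : Fin (k + 1) => c j = v),
          φ ((List.ofFn (g ∘ c)).take j.1) * ψ ((List.ofFn (g ∘ c)).drop j.1))
        = ∑ j : Fin (k+1), if c j = v then
            φ ((List.ofFn (g ∘ c)).take j.1) * ψ ((List.ofFn (g ∘ c)).drop j.1) else 0 :=
      fun c _ => Finset.sum_filter _ _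
    rw [Finset.sum_congr rfl hin, Finset.sum_comm]
    refine Finset.sum_congr rfl fun j _ => ?_
    simp only [hGdef, j.isLt, dif_pos, Fin.eta]
    rw [← Finset.sum_filter, Finset.filter_filter]
  have hvan : ∀ k j, N ≤ k → G k j = 0 := by
    intro k j hk
    simp only [hGdef]
    split_ifs with h
    · apply Finset.sum_eq_zero
      intro c hc
      simp only [mem_filter, mem_univ, true_and] at hc
      have := satChain_card hc.1.1
      omega
    · rfl
  calc ∑ k ∈ range N, ∑ c ∈ univ.filter (fun c : Fin (k + 1) → P => MaxChain c),
        ∑ j ∈ univ.filter (fun j : Fin (k + 1) => c j = v),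
          φ ((List.ofFn (g ∘ c)).take j.1) * ψ ((List.ofFn (g ∘ c)).drop j.1)
      = ∑ k ∈ range N, ∑ j ∈ range (k+1), G k j := Finset.sum_congr rfl fun k _ => hL k
    _ = ∑ a ∈ range N, ∑ b ∈ range N, G (a+b) a := triangle_sum G hvan
    _ = _ := by
        rw [Finset.sum_mul_sum]
        refine Finset.sum_congr rfl fun a _ => Finset.sum_congr rfl fun b _ => ?_
        simp only [hGdef, show a < a + b + 1 by omega, dif_pos]
        exact split_fixed g v a b φ ψ


open Finset

lemma take_ofFn_succ {a : ℕ} (g : P → S) (d : Fin (a+1) → P) :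
    (List.ofFn (g ∘ d)).take (a+1) = (List.ofFn (g ∘ d)).take a ++ [g (d (Fin.last a))] := by
  have hlen : a < (List.ofFn (g ∘ d)).length := by simp
  rw [List.take_succ, List.getElem?_eq_getElem hlen]
  simp only [List.getElem_ofFn, Function.comp_apply]
  rfl

lemma ofFn_eq_take_append {a : ℕ} (g : P → S) (d : Fin (a+1) → P) :
    List.ofFn (g ∘ d) = (List.ofFn (g ∘ d)).take a ++ [g (d (Fin.last a))] := by
  conv_lhs => rw [← List.take_length (l := List.ofFn (g ∘ d))]
  rw [show (List.ofFn (g ∘ d)).length = a + 1 by simp]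
  exact take_ofFn_succ g d

/-- the lower factor in the `τ` splitting is `W g v`. -/
lemma lower_factor_tau (g : P → S) (v : P) :
    (∑ a ∈ range (Fintype.card P),
      ∑ d ∈ univ.filter (fun d : Fin (a+1) → P =>
        SatChain d ∧ IsMin (d 0) ∧ d (Fin.last a) = v),
        ((List.ofFn (g ∘ d)).take a).reverse.prod) = Wfun g v := by
  classical
  have hN : 1 ≤ Fintype.card P := Fintype.card_pos (α := P) (h := ⟨v⟩)
  rw [show Fintype.card P = (Fintype.card P - 1) + 1 from (Nat.succ_pred_eq_of_pos hN).symm,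
    Finset.sum_range_succ']
  have hzero : (∑ d ∈ univ.filter (fun d : Fin (0+1) → P =>
      SatChain d ∧ IsMin (d 0) ∧ d (Fin.last 0) = v), ((List.ofFn (g ∘ d)).take 0).reverse.prod)
      = if IsMin v then 1 else 0 := by
    by_cases hmin : IsMin v
    · rw [if_pos hmin]
      have hfilter : univ.filter (fun d : Fin (0+1) → P =>
          SatChain d ∧ IsMin (d 0) ∧ d (Fin.last 0) = v) = {fun _ => v} := by
        ext c
        simp only [mem_filter, mem_univ, true_and, mem_singleton]
        constructor
        · rintro ⟨-, -, h3⟩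
          funext i
          rw [show i = Fin.last 0 from Fin.ext (by omega), h3]
        · rintro rfl
          exact ⟨satChain_one _, hmin, rfl⟩
      rw [hfilter, Finset.sum_singleton]
      simp
    · rw [if_neg hmin]
      apply Finset.sum_eq_zero
      intro c hc
      simp only [mem_filter, mem_univ, true_and] at hc
      obtain ⟨-, h2, h3⟩ := hc
      rw [show (0 : Fin 1) = Fin.last 0 from rfl, h3] at h2
      exact absurd h2 hmin
  have hstep : ∀ a : ℕ, (∑ d ∈ univ.filter (fun d : Fin (a+1+1) → P =>
      SatChain d ∧ IsMin (d 0) ∧ d (Fin.last (a+1)) = v),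
        ((List.ofFn (g ∘ d)).take (a+1)).reverse.prod)
      = ∑ y ∈ univ.filter (fun y => y ⋖ v), ∑ c ∈ univ.filter (fun c : Fin (a+1) → P =>
          SatChain c ∧ IsMin (c 0) ∧ c (Fin.last a) = y),
          ((List.ofFn (g ∘ c)).reverse).prod := by
    intro a
    rw [sum_chain_snoc v IsMin]
    refine Finset.sum_congr rfl fun y _ => Finset.sum_congr rfl fun c _ => ?_
    rw [ofFn_comp_snoc, List.take_left' (by simp)]
  simp_rw [hstep, hzero]
  rw [Finset.sum_comm]
  have hinner : ∀ y ∈ univ.filter (fun y => y ⋖ v),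
      (∑ a ∈ range (Fintype.card P - 1), ∑ c ∈ univ.filter (fun c : Fin (a+1) → P =>
        SatChain c ∧ IsMin (c 0) ∧ c (Fin.last a) = y), ((List.ofFn (g ∘ c)).reverse).prod)
      = ncNablaInv g y := by
    intro y hy
    simp only [mem_filter, mem_univ, true_and] at hy
    show _ = (∑ k ∈ range (Fintype.card P), ∑ c ∈ univ.filter (fun c : Fin (k + 1) → P =>
      SatChain c ∧ IsMin (c 0) ∧ c (Fin.last k) = y), ((List.ofFn (g ∘ c)).reverse).prod)
    rw [show Fintype.card P = (Fintype.card P - 1) + 1 from (Nat.succ_pred_eq_of_pos hN).symm,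
      Finset.sum_range_succ]
    have htop : (∑ c ∈ univ.filter (fun c : Fin (Fintype.card P - 1 + 1) → P =>
        SatChain c ∧ IsMin (c 0) ∧ c (Fin.last (Fintype.card P - 1)) = y),
        ((List.ofFn (g ∘ c)).reverse).prod) = 0 := by
      apply Finset.sum_eq_zero
      intro c hc
      simp only [mem_filter, mem_univ, true_and] at hc
      exfalso
      have hcard := satChain_card' hc.1 (z := v) (fun i => ?_)
      · omega
      · have : c i ≤ c (Fin.last _) := (satChain_strictMono hc.1).monotone (Fin.le_last i)
        rw [hc.2.2] at this
        exact (lt_of_le_of_lt this hy.lt).ne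
    rw [htop, add_zero]
    rfl
  rw [Finset.sum_congr rfl hinner, Wfun, add_comm]

/-- the upper factor in the `ε` splitting is `M g v`. -/
lemma upper_factor_eps (g : P → S) (v : P) :
    (∑ b ∈ range (Fintype.card P),
      ∑ e ∈ univ.filter (fun e : Fin (b+1) → P =>
        SatChain e ∧ e 0 = v ∧ IsMax (e (Fin.last b))),
        ((List.ofFn (g ∘ e)).tail).reverse.prod) = Mfun g v := by
  classical
  have hN : 1 ≤ Fintype.card P := Fintype.card_pos (α := P) (h := ⟨v⟩)
  rw [show Fintype.card P = (Fintype.card P - 1) + 1 from (Nat.succ_pred_eq_of_pos hN).symm,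
    Finset.sum_range_succ']
  have hzero : (∑ e ∈ univ.filter (fun e : Fin (0+1) → P =>
      SatChain e ∧ e 0 = v ∧ IsMax (e (Fin.last 0))), ((List.ofFn (g ∘ e)).tail).reverse.prod)
      = if IsMax v then 1 else 0 := by
    by_cases hmax : IsMax v
    · rw [if_pos hmax]
      have hfilter : univ.filter (fun e : Fin (0+1) → P =>
          SatChain e ∧ e 0 = v ∧ IsMax (e (Fin.last 0))) = {fun _ => v} := by
        ext c
        simp only [mem_filter, mem_univ, true_and, mem_singleton]
        constructor
        · rintro ⟨-, h2, -⟩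
          funext i
          rw [show i = 0 from Fin.ext (by omega), h2]
        · rintro rfl
          exact ⟨satChain_one _, rfl, hmax⟩
      rw [hfilter, Finset.sum_singleton]
      simp
    · rw [if_neg hmax]
      apply Finset.sum_eq_zero
      intro c hc
      simp only [mem_filter, mem_univ, true_and] at hc
      obtain ⟨-, h2, h3⟩ := hc
      rw [show Fin.last 0 = (0 : Fin 1) from rfl, h2] at h3
      exact absurd h3 hmax
  have hstep : ∀ b : ℕ, (∑ e ∈ univ.filter (fun e : Fin (b+1+1) → P =>
      SatChain e ∧ e 0 = v ∧ IsMax (e (Fin.last (b+1)))),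
        ((List.ofFn (g ∘ e)).tail).reverse.prod)
      = ∑ y ∈ univ.filter (fun y => v ⋖ y), ∑ c ∈ univ.filter (fun c : Fin (b+1) → P =>
          SatChain c ∧ c 0 = y ∧ IsMax (c (Fin.last b))),
          ((List.ofFn (g ∘ c)).reverse).prod := by
    intro b
    rw [sum_chain_cons v IsMax]
    refine Finset.sum_congr rfl fun y _ => Finset.sum_congr rfl fun c _ => ?_
    rw [ofFn_comp_cons]
    rfl
  simp_rw [hstep, hzero]
  rw [Finset.sum_comm]
  have hinner : ∀ y ∈ univ.filter (fun y => v ⋖ y),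
      (∑ b ∈ range (Fintype.card P - 1), ∑ c ∈ univ.filter (fun c : Fin (b+1) → P =>
        SatChain c ∧ c 0 = y ∧ IsMax (c (Fin.last b))), ((List.ofFn (g ∘ c)).reverse).prod)
      = ncDeltaInv g y := by
    intro y hy
    simp only [mem_filter, mem_univ, true_and] at hy
    show _ = (∑ k ∈ range (Fintype.card P), ∑ c ∈ univ.filter (fun c : Fin (k + 1) → P =>
      SatChain c ∧ c 0 = y ∧ IsMax (c (Fin.last k))), ((List.ofFn (g ∘ c)).reverse).prod)
    rw [show Fintype.card P = (Fintype.card P - 1) + 1 from (Nat.succ_pred_eq_of_pos hN).symm,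
      Finset.sum_range_succ]
    have htop : (∑ c ∈ univ.filter (fun c : Fin (Fintype.card P - 1 + 1) → P =>
        SatChain c ∧ c 0 = y ∧ IsMax (c (Fin.last (Fintype.card P - 1)))),
        ((List.ofFn (g ∘ c)).reverse).prod) = 0 := by
      apply Finset.sum_eq_zero
      intro c hc
      simp only [mem_filter, mem_univ, true_and] at hc
      exfalso
      have hcard := satChain_card' hc.1 (z := v) (fun i => ?_)
      · omega
      · have : c 0 ≤ c i := (satChain_strictMono hc.1).monotone (Fin.zero_le i)
        rw [hc.2.1] at this
        exact (lt_of_lt_of_le hy.lt this).ne'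
    rw [htop, add_zero]
    rfl
  rw [Finset.sum_congr rfl hinner, Mfun, add_comm]

lemma tauDenom_eq (g : P → S) (v : P) :
    tauDenom g v = Wfun g v * ncDeltaInv g v := by
  have h := sum_maxChain_split g v (fun l => l.reverse.prod) (fun l => l.reverse.prod)
  rw [lower_factor_tau] at h
  exact h

lemma epsDenom_eq (g : P → S) (v : P) :
    epsDenom g v = ncNablaInv g v * Mfun g v := by
  have h := sum_maxChain_split g v (fun l => g v * l.reverse.prod)
    (fun l => l.tail.reverse.prod)
  rw [upper_factor_eps] at h
  have hLHS : epsDenom g v = (∑ k ∈ range (Fintype.card P),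
      ∑ c ∈ univ.filter (fun c : Fin (k + 1) → P => MaxChain c),
        ∑ j ∈ univ.filter (fun j : Fin (k + 1) => c j = v),
          (fun l : List S => g v * l.reverse.prod) ((List.ofFn (g ∘ c)).take j.1) *
            (fun l : List S => l.tail.reverse.prod) ((List.ofFn (g ∘ c)).drop j.1)) := by
    refine Finset.sum_congr rfl fun k _ => Finset.sum_congr rfl fun c hc =>
      Finset.sum_congr rfl fun j hj => ?_
    simp only [mem_filter, mem_univ, true_and] at hj
    have hlen : j.1 < (List.ofFn (g ∘ c)).length := by simp [j.isLt]
    have htake : (List.ofFn (g ∘ c)).take (j.1 + 1)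
        = (List.ofFn (g ∘ c)).take j.1 ++ [g v] := by
      rw [List.take_succ, List.getElem?_eq_getElem hlen]
      simp only [List.getElem_ofFn, Function.comp_apply, Fin.eta, hj]
      rfl
    have hdrop : (List.ofFn (g ∘ c)).drop (j.1 + 1)
        = ((List.ofFn (g ∘ c)).drop j.1).tail := List.tail_drop.symm
    rw [htake, hdrop]
    simp [List.reverse_append]
  have hRHS : (∑ a ∈ range (Fintype.card P),
      ∑ d ∈ univ.filter (fun d : Fin (a+1) → P =>
        SatChain d ∧ IsMin (d 0) ∧ d (Fin.last a) = v),
        (fun l : List S => g v * l.reverse.prod) ((List.ofFn (g ∘ d)).take a))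
      = ncNablaInv g v := by
    refine Finset.sum_congr rfl fun a _ => Finset.sum_congr rfl fun d hd => ?_
    simp only [mem_filter, mem_univ, true_and] at hd
    conv_rhs => rw [ofFn_eq_take_append g d]
    simp [List.reverse_append, hd.2.2]
  rw [hLHS, h, hRHS]


open Finset

lemma list_mem_left_of_lt {l p q : List P} {x : P}
    (hord : ∀ (i j : ℕ) (hi : i < l.length) (hj : j < l.length), l[i]'hi < l[j]'hj → i < j)
    (h : l = p ++ x :: q) {a : P} (ha : a ∈ l) (hax : a < x) : a ∈ p := by
  obtain ⟨n, hn, hna⟩ := List.mem_iff_getElem.1 ha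
  have hxl : p.length < l.length := by rw [h]; simp
  have hx : l[p.length]'hxl = x := by
    subst h
    rw [List.getElem_append_right (le_refl p.length)]
    simp
  have hlt : n < p.length := hord n p.length hn hxl (by rw [hna, hx]; exact hax)
  have : l[n]'hn = p[n]'hlt := by
    subst h
    exact List.getElem_append_left hlt
  rw [this] at hna
  exact hna ▸ List.getElem_mem hlt

lemma list_mem_right_of_gt {l p q : List P} {x : P}
    (hord : ∀ (i j : ℕ) (hi : i < l.length) (hj : j < l.length), l[i]'hi < l[j]'hj → i < j)
    (h : l = p ++ x :: q) {b : P} (hb : b ∈ l) (hxb : x < b) : b ∈ q := by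
  have hxl : p.length < l.length := by rw [h]; simp
  have hx : l[p.length]'hxl = x := by
    subst h
    rw [List.getElem_append_right (le_refl p.length)]
    simp
  rw [h, List.mem_append, List.mem_cons] at hb
  rcases hb with hbp | hbx | hbq
  · exfalso
    obtain ⟨m, hm, hmb⟩ := List.mem_iff_getElem.1 hbp
    have hml : m < l.length := by rw [h]; simp; omega
    have : l[m]'hml = b := by
      subst h
      rw [List.getElem_append_left hm]
      exact hmb
    have := hord p.length m hxl hml (by rw [hx, this]; exact hxb)
    omega
  · exact absurd (hbx ▸ hxb) (lt_irrefl b)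
  · exact hbq

lemma central_shift {C : S} (hC : ∀ s : S, C * s = s * C) (a b : S) :
    C * (a * b) = a * (C * b) := by
  rw [← mul_assoc, hC a, mul_assoc]

lemma Mfun_ne {g : P → S} {x : P} (hD : ncDeltaInv g x ≠ 0) : Mfun g x ≠ 0 :=
  left_ne_zero_of_mul (by rw [← deltaInv_rec]; exact hD)

lemma gfun_ne {g : P → S} {x : P} (hD : ncDeltaInv g x ≠ 0) : g x ≠ 0 :=
  right_ne_zero_of_mul (a := Mfun g x) (by rw [← deltaInv_rec]; exact hD)

lemma Wfun_ne {g : P → S} {x : P} (hU : ncNablaInv g x ≠ 0) : Wfun g x ≠ 0 :=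
  right_ne_zero_of_mul (a := g x) (by rw [← nablaInv_rec]; exact hU)

lemma lSum_eq_W (f g : P → S) (x : P) (h : ∀ u, u ⋖ x → f u = ncNablaInv g u) :
    lSum f x = Wfun g x := by
  unfold lSum Wfun
  congr 1
  exact Finset.sum_congr rfl fun u hu => h u (by simpa using hu)

lemma uInvSum_eq_M (C : S) (f g : P → S) (x : P)
    (h : ∀ y, x ⋖ y → f y = C * (ncDeltaInv g y)⁻¹) :
    uInvSum C f x = Mfun g x * C⁻¹ := by
  unfold uInvSum Mfun
  rw [add_mul, Finset.sum_mul, ite_mul, one_mul, zero_mul]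
  congr 1
  exact Finset.sum_congr rfl fun y hy => by
    rw [h y (by simpa using hy), mul_inv_rev, inv_inv]

lemma alg_E {C M gx W : S} (hC0 : C ≠ 0) (hM : M ≠ 0) (hC : ∀ s : S, C * s = s * C) :
    (M * C⁻¹)⁻¹ * (C * (M * gx)⁻¹)⁻¹ * W = gx * W := by
  simp only [mul_inv_rev, inv_inv, mul_assoc]
  rw [inv_mul_cancel_left₀ hM, central_shift hC, mul_inv_cancel_left₀ hC0]

lemma alg_T' {C gx W M2 : S} (hW : W ≠ 0) (hC : ∀ s : S, C * s = s * C) :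
    W * (gx * W)⁻¹ * (M2 * C⁻¹)⁻¹ = C * (M2 * gx)⁻¹ := by
  simp only [mul_inv_rev, inv_inv, mul_assoc]
  rw [mul_inv_cancel_left₀ hW, ← central_shift hC]

lemma alg_midT {C W D M : S} (hC0 : C ≠ 0) (hC : ∀ s : S, C * s = s * C) :
    W * (C * D⁻¹)⁻¹ * (M * C⁻¹)⁻¹ = C * (M * (C * (W * D)⁻¹))⁻¹ := by
  simp only [mul_inv_rev, inv_inv, mul_assoc]
  rw [inv_mul_cancel_left₀ hC0, central_shift hC, central_shift hC, mul_inv_cancel_left₀ hC0]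

lemma alg_midE {C W M gv : S} (hC0 : C ≠ 0) (hM : M ≠ 0) (hC : ∀ s : S, C * s = s * C) :
    (M * C⁻¹)⁻¹ * (C * (M * gv)⁻¹)⁻¹ * W = C * (M * (C * (gv * W * M)⁻¹))⁻¹ := by
  rw [alg_E hC0 hM hC]
  simp only [mul_inv_rev, inv_inv, mul_assoc]
  rw [central_shift hC, central_shift hC, central_shift hC, mul_inv_cancel_left₀ hC0,
    mul_inv_cancel₀ hM, mul_one]


open Finset

section Steps

variable {C : S} {g : P → S} {v : P} {lev : List P}

lemma step_E (hC : ∀ s : S, C * s = s * C) (hC0 : C ≠ 0)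
    (hD : ∀ u : P, ncDeltaInv g u ≠ 0)
    (hlev : IsLinearExtensionOn {x : P | x < v} lev) {p q : List P} {x : P}
    (h : lev = p ++ x :: q) :
    ncE C x (fun u => if u ∈ p then ncNablaInv g u else C * (ncDeltaInv g u)⁻¹)
      = fun u => if u ∈ p ++ [x] then ncNablaInv g u else C * (ncDeltaInv g u)⁻¹ := by
  have hdisj : p.Disjoint (x :: q) := List.disjoint_of_nodup_append (h ▸ hlev.1)
  have hxp : x ∉ p := fun hx => hdisj hx (List.mem_cons_self (a := x) (l := q))
  have hxlev : x ∈ lev := h ▸ (List.mem_append.2 (Or.inr (List.mem_cons_self (a := x) (l := q))))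
  have hxv : x < v := (hlev.2.1 x).1 hxlev
  funext u
  by_cases hu : u = x
  · subst hu
    simp only [ncE, if_pos rfl,
      if_pos (List.mem_append.2 (Or.inr (List.mem_singleton.2 rfl)))]
    have hfx : (if u ∈ p then ncNablaInv g u else C * (ncDeltaInv g u)⁻¹)
        = C * (ncDeltaInv g u)⁻¹ := if_neg hxp
    have hl : lSum (fun w => if w ∈ p then ncNablaInv g w else C * (ncDeltaInv g w)⁻¹) u
        = Wfun g u := by
      refine lSum_eq_W _ g u fun w hw => ?_
      have hwlev : w ∈ lev := (hlev.2.1 w).2 (hw.lt.trans hxv)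
      exact if_pos (list_mem_left_of_lt hlev.2.2 h hwlev hw.lt)
    have hri : uInvSum C (fun w => if w ∈ p then ncNablaInv g w else C * (ncDeltaInv g w)⁻¹) u
        = Mfun g u * C⁻¹ := by
      refine uInvSum_eq_M C _ g u fun y hy => ?_
      have hynp : y ∉ p := by
        intro hyp
        have hylev : y ∈ lev := h ▸ (List.mem_append.2 (Or.inl hyp))
        exact hdisj hyp (List.mem_cons_of_mem _ (list_mem_right_of_gt hlev.2.2 h hylev hy.lt))
      exact if_neg hynp
    rw [hri, hfx, hl, deltaInv_rec g u, alg_E hC0 (Mfun_ne (hD u)) hC, ← nablaInv_rec,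
      if_pos trivial]
  · simp only [ncE, if_neg hu]
    by_cases hup : u ∈ p
    · rw [if_pos hup, if_pos (List.mem_append.2 (Or.inl hup))]
    · rw [if_neg hup, if_neg (by
        intro hmem
        rcases List.mem_append.1 hmem with h1 | h1
        · exact hup h1
        · exact hu (List.mem_singleton.1 h1))]

lemma step_T (hC : ∀ s : S, C * s = s * C) (hC0 : C ≠ 0) {g2 : P → S}
    (hD2 : ∀ u : P, ncDeltaInv g2 u ≠ 0)
    (hlev : IsLinearExtensionOn {x : P | x < v} lev) {p q : List P} {x : P}
    (h : lev = p ++ x :: q) (hg2x : g2 x = g x) (hUx : ncNablaInv g x ≠ 0) :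
    ncT C x (fun u => if u ∈ p ++ [x] then ncNablaInv g u else C * (ncDeltaInv g2 u)⁻¹)
      = fun u => if u ∈ p then ncNablaInv g u else C * (ncDeltaInv g2 u)⁻¹ := by
  have hdisj : p.Disjoint (x :: q) := List.disjoint_of_nodup_append (h ▸ hlev.1)
  have hxp : x ∉ p := fun hx => hdisj hx (List.mem_cons_self (a := x) (l := q))
  have hxlev : x ∈ lev := h ▸ (List.mem_append.2 (Or.inr (List.mem_cons_self (a := x) (l := q))))
  have hxv : x < v := (hlev.2.1 x).1 hxlev
  funext u
  by_cases hu : u = x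
  · subst hu
    simp only [ncT, if_pos rfl, if_neg hxp]
    have hfx : (if u ∈ p ++ [u] then ncNablaInv g u else C * (ncDeltaInv g2 u)⁻¹)
        = ncNablaInv g u :=
      if_pos (List.mem_append.2 (Or.inr (List.mem_singleton.2 rfl)))
    have hl : lSum (fun w => if w ∈ p ++ [u] then ncNablaInv g w else C * (ncDeltaInv g2 w)⁻¹) u
        = Wfun g u := by
      refine lSum_eq_W _ g u fun w hw => ?_
      have hwlev : w ∈ lev := (hlev.2.1 w).2 (hw.lt.trans hxv)
      exact if_pos (List.mem_append.2 (Or.inl (list_mem_left_of_lt hlev.2.2 h hwlev hw.lt)))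
    have hri : uInvSum C
        (fun w => if w ∈ p ++ [u] then ncNablaInv g w else C * (ncDeltaInv g2 w)⁻¹) u
        = Mfun g2 u * C⁻¹ := by
      refine uInvSum_eq_M C _ g2 u fun y hy => ?_
      refine if_neg ?_
      intro hmem
      rcases List.mem_append.1 hmem with h1 | h1
      · have hylev : y ∈ lev := h ▸ (List.mem_append.2 (Or.inl h1))
        exact hdisj h1 (List.mem_cons_of_mem _ (list_mem_right_of_gt hlev.2.2 h hylev hy.lt))
      · exact hy.lt.ne' (List.mem_singleton.1 h1)
    rw [hri, hfx, hl, nablaInv_rec g u, deltaInv_rec g2 u, hg2x,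
      alg_T' (Wfun_ne hUx) hC, if_pos trivial]
  · simp only [ncT, if_neg hu]
    by_cases hup : u ∈ p
    · rw [if_pos (List.mem_append.2 (Or.inl hup)), if_pos hup]
    · rw [if_neg hup, if_neg (by
        intro hmem
        rcases List.mem_append.1 hmem with h1 | h1
        · exact hup h1
        · exact hu (List.mem_singleton.1 h1))]

lemma step_mid_T (hC : ∀ s : S, C * s = s * C) (hC0 : C ≠ 0)
    (hD : ∀ u : P, ncDeltaInv g u ≠ 0)
    (hlev : IsLinearExtensionOn {x : P | x < v} lev) :
    ncT C v (fun u => if u ∈ lev then ncNablaInv g u else C * (ncDeltaInv g u)⁻¹)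
      = fun u => if u ∈ lev then ncNablaInv g u
          else C * (ncDeltaInv (ncTau C v g) u)⁻¹ := by
  have hvlev : v ∉ lev := fun hv => absurd ((hlev.2.1 v).1 hv) (lt_irrefl v)
  have hcong : ∀ u : P, ¬ u < v → u ≠ v → ncDeltaInv g u = ncDeltaInv (ncTau C v g) u := by
    intro u hu1 hu2
    refine deltaInv_congr fun z hz => ?_
    have hzv : z ≠ v := by
      rintro rfl
      exact hu1 (lt_of_le_of_ne hz hu2)
    simp only [ncTau, if_neg hzv]
  have hcov : ∀ y, v ⋖ y → ncDeltaInv g y = ncDeltaInv (ncTau C v g) y := by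
    intro y hy
    refine deltaInv_congr fun z hz => ?_
    have hzv : z ≠ v := fun hzv => absurd (hzv ▸ hz) (not_le_of_gt hy.lt)
    simp only [ncTau, if_neg hzv]
  funext u
  by_cases hu : u = v
  · subst hu
    simp only [ncT, if_pos rfl, if_neg hvlev]
    have hl : lSum (fun w => if w ∈ lev then ncNablaInv g w else C * (ncDeltaInv g w)⁻¹) u
        = Wfun g u := by
      refine lSum_eq_W _ g u fun w hw => ?_
      exact if_pos ((hlev.2.1 w).2 hw.lt)
    have hri : uInvSum C
        (fun w => if w ∈ lev then ncNablaInv g w else C * (ncDeltaInv g w)⁻¹) u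
        = Mfun g u * C⁻¹ := by
      refine uInvSum_eq_M C _ g u fun y hy => ?_
      refine if_neg fun hmem => absurd ((hlev.2.1 y).1 hmem) (not_lt_of_gt hy.lt)
    have hMeq : Mfun g u = Mfun (ncTau C u g) u := by
      unfold Mfun
      congr 1
      exact Finset.sum_congr rfl fun y hy => hcov y (by simpa using hy)
    rw [hri, hl, deltaInv_rec (ncTau C u g) u, ← hMeq]
    have : ncTau C u g u = C * (tauDenom g u)⁻¹ := if_pos rfl
    rw [this, tauDenom_eq]
    exact alg_midT hC0 hC
  · simp only [ncT, if_neg hu]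
    by_cases hul : u ∈ lev
    · rw [if_pos hul, if_pos hul]
    · rw [if_neg hul, if_neg hul, hcong u (fun hlt => hul ((hlev.2.1 u).2 hlt)) hu]

lemma step_mid_E (hC : ∀ s : S, C * s = s * C) (hC0 : C ≠ 0)
    (hD : ∀ u : P, ncDeltaInv g u ≠ 0)
    (hlev : IsLinearExtensionOn {x : P | x < v} lev) :
    ncE C v (fun u => if u ∈ lev then ncNablaInv g u else C * (ncDeltaInv g u)⁻¹)
      = fun u => if u ∈ lev then ncNablaInv g u
          else C * (ncDeltaInv (ncEps C v g) u)⁻¹ := by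
  have hvlev : v ∉ lev := fun hv => absurd ((hlev.2.1 v).1 hv) (lt_irrefl v)
  have hcong : ∀ u : P, ¬ u < v → u ≠ v → ncDeltaInv g u = ncDeltaInv (ncEps C v g) u := by
    intro u hu1 hu2
    refine deltaInv_congr fun z hz => ?_
    have hzv : z ≠ v := by
      rintro rfl
      exact hu1 (lt_of_le_of_ne hz hu2)
    simp only [ncEps, if_neg hzv]
  have hcov : ∀ y, v ⋖ y → ncDeltaInv g y = ncDeltaInv (ncEps C v g) y := by
    intro y hy
    refine deltaInv_congr fun z hz => ?_
    have hzv : z ≠ v := fun hzv => absurd (hzv ▸ hz) (not_le_of_gt hy.lt)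
    simp only [ncEps, if_neg hzv]
  funext u
  by_cases hu : u = v
  · subst hu
    simp only [ncE, if_pos rfl, if_neg hvlev]
    have hl : lSum (fun w => if w ∈ lev then ncNablaInv g w else C * (ncDeltaInv g w)⁻¹) u
        = Wfun g u := by
      refine lSum_eq_W _ g u fun w hw => ?_
      exact if_pos ((hlev.2.1 w).2 hw.lt)
    have hri : uInvSum C
        (fun w => if w ∈ lev then ncNablaInv g w else C * (ncDeltaInv g w)⁻¹) u
        = Mfun g u * C⁻¹ := by
      refine uInvSum_eq_M C _ g u fun y hy => ?_
      refine if_neg fun hmem => absurd ((hlev.2.1 y).1 hmem) (not_lt_of_gt hy.lt)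
    have hMeq : Mfun g u = Mfun (ncEps C u g) u := by
      unfold Mfun
      congr 1
      exact Finset.sum_congr rfl fun y hy => hcov y (by simpa using hy)
    rw [hri, hl, deltaInv_rec (ncEps C u g) u, ← hMeq]
    have : ncEps C u g u = C * (epsDenom g u)⁻¹ := if_pos rfl
    rw [this, epsDenom_eq, nablaInv_rec g u, deltaInv_rec g u]
    exact alg_midE hC0 (Mfun_ne (hD u)) hC
  · simp only [ncE, if_neg hu]
    by_cases hul : u ∈ lev
    · rw [if_pos hul, if_pos hul]
    · rw [if_neg hul, if_neg hul, hcong u (fun hlt => hul ((hlev.2.1 u).2 hlt)) hu]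

end Steps


open Finset

lemma applyOOps_append (C : S) (l₁ l₂ : List (OOp P)) (f : P → S) :
    applyOOps C (l₁ ++ l₂) f = applyOOps C l₂ (applyOOps C l₁ f) :=
  List.foldl_append

lemma OOpsDef_append (C : S) : ∀ (l₁ l₂ : List (OOp P)) (f : P → S),
    OOpsDef C (l₁ ++ l₂) f → OOpsDef C l₂ (applyOOps C l₁ f)
  | [], _, _, h => h
  | _ :: l₁, l₂, _, h => OOpsDef_append C l₁ l₂ _ h.2

lemma C_ne_zero {C : S} {F : P → S} :
    ∀ {l : List (OOp P)}, l ≠ [] → OOpsDef C l (ncTheta C F) → C ≠ 0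
  | [], h, _ => absurd rfl h
  | _ :: _, _, hd => left_ne_zero_of_mul hd.1.1

section Phases

variable {C : S} {g : P → S} {v : P} {lev : List P}

lemma phase1 (hC : ∀ s : S, C * s = s * C) (hC0 : C ≠ 0)
    (hD : ∀ u : P, ncDeltaInv g u ≠ 0)
    (hlev : IsLinearExtensionOn {x : P | x < v} lev) :
    ∀ (q p : List P), lev = p ++ q →
    applyOOps C (q.map OOp.E)
      (fun u => if u ∈ p then ncNablaInv g u else C * (ncDeltaInv g u)⁻¹)
    = fun u => if u ∈ lev then ncNablaInv g u else C * (ncDeltaInv g u)⁻¹ := by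
  intro q
  induction q with
  | nil =>
    intro p h
    rw [List.append_nil] at h
    subst h
    rfl
  | cons x q' ih =>
    intro p h
    have hstep := step_E hC hC0 hD hlev h
    calc applyOOps C ((x :: q').map OOp.E)
          (fun u => if u ∈ p then ncNablaInv g u else C * (ncDeltaInv g u)⁻¹)
        = applyOOps C (q'.map OOp.E)
          (ncE C x (fun u => if u ∈ p then ncNablaInv g u else C * (ncDeltaInv g u)⁻¹)) := rfl
      _ = applyOOps C (q'.map OOp.E)
          (fun u => if u ∈ p ++ [x] then ncNablaInv g u else C * (ncDeltaInv g u)⁻¹) := by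
            rw [hstep]
      _ = _ := ih (p ++ [x]) (by rw [h, List.append_assoc]; rfl)

lemma phase3 (hC : ∀ s : S, C * s = s * C) (hC0 : C ≠ 0) {g2 : P → S}
    (hD2 : ∀ u : P, ncDeltaInv g2 u ≠ 0)
    (hg2 : ∀ x ∈ lev, g2 x = g x)
    (hlev : IsLinearExtensionOn {x : P | x < v} lev) :
    ∀ (r s : List P), lev = r.reverse ++ s →
    OOpsDef C (r.map OOp.T)
      (fun u => if u ∈ r.reverse then ncNablaInv g u else C * (ncDeltaInv g2 u)⁻¹) →
    applyOOps C (r.map OOp.T)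
      (fun u => if u ∈ r.reverse then ncNablaInv g u else C * (ncDeltaInv g2 u)⁻¹)
    = fun u => C * (ncDeltaInv g2 u)⁻¹ := by
  intro r
  induction r with
  | nil =>
    intro s h hdef
    funext u
    simp [applyOOps]
  | cons x r' ih =>
    intro s h hdef
    have hrev : (x :: r').reverse = r'.reverse ++ [x] := by simp
    have h' : lev = r'.reverse ++ (x :: s) := by rw [h, hrev, List.append_assoc]; rfl
    have hxlev : x ∈ lev := by
      rw [h']
      exact List.mem_append.2 (Or.inr (List.mem_cons_self (a := x) (l := s)))
    have hf0 : (fun u => if u ∈ (x :: r').reverse then ncNablaInv g u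
          else C * (ncDeltaInv g2 u)⁻¹)
        = fun u => if u ∈ r'.reverse ++ [x] then ncNablaInv g u
          else C * (ncDeltaInv g2 u)⁻¹ := by
      simp only [hrev]
    have hUx : ncNablaInv g x ≠ 0 := by
      have hne : (if x ∈ (x :: r').reverse then ncNablaInv g x
          else C * (ncDeltaInv g2 x)⁻¹) ≠ 0 := hdef.1.1
      rwa [if_pos (by rw [hrev]; exact List.mem_append.2 (Or.inr (List.mem_singleton.2 rfl)))]
        at hne
    have hstep := step_T hC hC0 hD2 hlev h' (hg2 x hxlev) hUx
    have hdef' : OOpsDef C (r'.map OOp.T)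
        (fun u => if u ∈ r'.reverse then ncNablaInv g u else C * (ncDeltaInv g2 u)⁻¹) := by
      have h2 := hdef.2
      show OOpsDef C (r'.map OOp.T) _
      rwa [show applyOOp C (OOp.T x) (fun u => if u ∈ (x :: r').reverse then ncNablaInv g u
          else C * (ncDeltaInv g2 u)⁻¹) = ncT C x (fun u => if u ∈ (x :: r').reverse
          then ncNablaInv g u else C * (ncDeltaInv g2 u)⁻¹) from rfl, hf0, hstep] at h2
    calc applyOOps C ((x :: r').map OOp.T)
          (fun u => if u ∈ (x :: r').reverse then ncNablaInv g u else C * (ncDeltaInv g2 u)⁻¹)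
        = applyOOps C (r'.map OOp.T)
          (ncT C x (fun u => if u ∈ (x :: r').reverse then ncNablaInv g u
            else C * (ncDeltaInv g2 u)⁻¹)) := rfl
      _ = applyOOps C (r'.map OOp.T)
          (fun u => if u ∈ r'.reverse then ncNablaInv g u else C * (ncDeltaInv g2 u)⁻¹) := by
            rw [hf0, hstep]
      _ = _ := ih (x :: s) h' hdef'

end Phases

end NC

open NC in
/-- Let `v ∈ P` and let `lev = (x₁,…,x_k)` be a linear extension of
`{x ∈ P : x < v}`.  With `η_v = T_{x₁} ∘ ⋯ ∘ T_{x_k}`, `τ_v* = η_v ∘ T_v ∘ η_v⁻¹` and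
`ε_v* = η_v ∘ E_v ∘ η_v⁻¹` (realized by the operation sequences `tauStarOps v lev` and
`epsStarOps v lev`), we have `Θ ∘ Δ⁻¹ ∘ τ_v = τ_v* ∘ Θ ∘ Δ⁻¹` and
`Θ ∘ Δ⁻¹ ∘ ε_v = ε_v* ∘ Θ ∘ Δ⁻¹`, on all `S`-labelings for which both sides
are defined. -/
theorem theta_deltaInv_ncTau_eq_tauStar (C : S) (hC : ∀ s : S, C * s = s * C) (v : P)
    (lev : List P) (hlev : IsLinearExtensionOn {x : P | x < v} lev) (g : P → S) :
    (tauDenom g v ≠ 0 →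
     (∀ x : P, ncDeltaInv (ncTau C v g) x ≠ 0) →
     (∀ x : P, ncDeltaInv g x ≠ 0) →
     OOpsDef C (tauStarOps v lev) (ncTheta C (ncDeltaInv g)) →
      ncTheta C (ncDeltaInv (ncTau C v g))
        = applyOOps C (tauStarOps v lev) (ncTheta C (ncDeltaInv g))) ∧
    (epsDenom g v ≠ 0 →
     (∀ x : P, ncDeltaInv (ncEps C v g) x ≠ 0) →
     (∀ x : P, ncDeltaInv g x ≠ 0) →
     OOpsDef C (epsStarOps v lev) (ncTheta C (ncDeltaInv g)) →
      ncTheta C (ncDeltaInv (ncEps C v g))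
        = applyOOps C (epsStarOps v lev) (ncTheta C (ncDeltaInv g))) := by
  classical
  have hlevmem : ∀ x, x ∈ lev ↔ x < v := fun x => hlev.2.1 x
  constructor
  · intro htd hD' hD hdef
    have hC0 : C ≠ 0 := NC.C_ne_zero (show tauStarOps v lev ≠ [] by simp [tauStarOps]) hdef
    have hstart : ncTheta C (ncDeltaInv g)
        = fun u => if u ∈ ([] : List P) then ncNablaInv g u else C * (ncDeltaInv g u)⁻¹ := by
      funext u
      simp [ncTheta]
    have h1 : applyOOps C (lev.map OOp.E) (ncTheta C (ncDeltaInv g))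
        = fun u => if u ∈ lev then ncNablaInv g u else C * (ncDeltaInv g u)⁻¹ := by
      rw [hstart]
      exact NC.phase1 hC hC0 hD hlev lev [] rfl
    have h2 : applyOOps C (lev.map OOp.E ++ [OOp.T v]) (ncTheta C (ncDeltaInv g))
        = fun u => if u ∈ lev then ncNablaInv g u
            else C * (ncDeltaInv (ncTau C v g) u)⁻¹ := by
      rw [applyOOps_append, h1]
      exact NC.step_mid_T hC hC0 hD hlev
    have hops : tauStarOps v lev
        = (lev.map OOp.E ++ [OOp.T v]) ++ (lev.reverse).map OOp.T := rfl
    have hg2 : ∀ x ∈ lev, ncTau C v g x = g x := fun x hx =>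
      if_neg (ne_of_lt ((hlevmem x).1 hx))
    have hdef3 : OOpsDef C ((lev.reverse).map OOp.T)
        (fun u => if u ∈ lev then ncNablaInv g u
          else C * (ncDeltaInv (ncTau C v g) u)⁻¹) := by
      have hh := NC.OOpsDef_append C (lev.map OOp.E ++ [OOp.T v]) ((lev.reverse).map OOp.T)
        (ncTheta C (ncDeltaInv g)) (by rw [← hops]; exact hdef)
      rwa [h2] at hh
    have h3 := NC.phase3 hC hC0 hD' hg2 hlev lev.reverse []
      (by rw [List.reverse_reverse, List.append_nil])
      (by rw [List.reverse_reverse]; exact hdef3)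
    rw [List.reverse_reverse] at h3
    rw [hops, applyOOps_append, h2, h3]
    rfl
  · intro htd hD' hD hdef
    have hC0 : C ≠ 0 := NC.C_ne_zero (show epsStarOps v lev ≠ [] by simp [epsStarOps]) hdef
    have hstart : ncTheta C (ncDeltaInv g)
        = fun u => if u ∈ ([] : List P) then ncNablaInv g u else C * (ncDeltaInv g u)⁻¹ := by
      funext u
      simp [ncTheta]
    have h1 : applyOOps C (lev.map OOp.E) (ncTheta C (ncDeltaInv g))
        = fun u => if u ∈ lev then ncNablaInv g u else C * (ncDeltaInv g u)⁻¹ := by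
      rw [hstart]
      exact NC.phase1 hC hC0 hD hlev lev [] rfl
    have h2 : applyOOps C (lev.map OOp.E ++ [OOp.E v]) (ncTheta C (ncDeltaInv g))
        = fun u => if u ∈ lev then ncNablaInv g u
            else C * (ncDeltaInv (ncEps C v g) u)⁻¹ := by
      rw [applyOOps_append, h1]
      exact NC.step_mid_E hC hC0 hD hlev
    have hops : epsStarOps v lev
        = (lev.map OOp.E ++ [OOp.E v]) ++ (lev.reverse).map OOp.T := rfl
    have hg2 : ∀ x ∈ lev, ncEps C v g x = g x := fun x hx =>
      if_neg (ne_of_lt ((hlevmem x).1 hx))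
    have hdef3 : OOpsDef C ((lev.reverse).map OOp.T)
        (fun u => if u ∈ lev then ncNablaInv g u
          else C * (ncDeltaInv (ncEps C v g) u)⁻¹) := by
      have hh := NC.OOpsDef_append C (lev.map OOp.E ++ [OOp.E v]) ((lev.reverse).map OOp.T)
        (ncTheta C (ncDeltaInv g)) (by rw [← hops]; exact hdef)
      rwa [h2] at hh
    have h3 := NC.phase3 hC hC0 hD' hg2 hlev lev.reverse []
      (by rw [List.reverse_reverse, List.append_nil])
      (by rw [List.reverse_reverse]; exact hdef3)
    rw [List.reverse_reverse] at h3
    rw [hops, applyOOps_append, h2, h3]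
    rfl
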